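/- arXiv:1411.2928 — 4 statements merged into one kernel-verified Lean document; each statement's English description precedes it below -/
import Mathlib

section
/- Any two disjoint compact convex polygons in the plane, each of whose sides is parallel to one of the lines in a fixed finite set L of lines through the origin, can be separated by a line parallel to some line in L. -/
noncomputable section

abbrev Pl := EuclideanSpace ℝ (Fin 2)

/-- `P` is a compact convex polygon each of whose sides is parallel to one of the lines through
the origin whose directions belong to `L` (lines are encoded by nonzero direction vectors;
the polygon is an intersection of closed half-planes whose boundary normals are perpendicular
to some direction in `L`). -/
def IsPolyDir (L : Finset Pl) (P : Set Pl) : Prop :=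
  IsCompact P ∧ P.Nonempty ∧
    ∃ F : Finset (Pl × ℝ),
      (∀ q ∈ F, q.1 ≠ 0 ∧ ∃ v ∈ L, (inner ℝ q.1 v : ℝ) = 0) ∧
      P = ⋂ q ∈ F, {x : Pl | (inner ℝ x q.1 : ℝ) ≤ q.2}

/-- Any two disjoint compact convex polygons with sides parallel to lines in `L` can be
separated by a line parallel to some line in `L`. -/
theorem stmt0 (L : Finset Pl) (hL : ∀ v ∈ L, v ≠ (0 : Pl))
    (P Q : Set Pl) (hP : IsPolyDir L P) (hQ : IsPolyDir L Q)
    (hdisj : Disjoint P Q) :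
    ∃ v ∈ L, ∃ w : Pl, w ≠ 0 ∧ (inner ℝ w v : ℝ) = 0 ∧
      ∃ c : ℝ, (∀ x ∈ P, (inner ℝ x w : ℝ) ≤ c) ∧ (∀ x ∈ Q, c ≤ (inner ℝ x w : ℝ)) := by
  classical
  obtain ⟨hPc, hPne, FP, hFP, hPeq⟩ := hP
  obtain ⟨hQc, hQne, FQ, hFQ, hQeq⟩ := hQ
  by_contra hcon
  push_neg at hcon
  -- membership in halfplanes
  have hPsub : ∀ q ∈ FP, ∀ x ∈ P, (inner ℝ x q.1 : ℝ) ≤ q.2 := by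
    intro q hq x hx
    rw [hPeq] at hx
    simpa using Set.mem_iInter₂.1 hx q hq
  have hQsub : ∀ q ∈ FQ, ∀ x ∈ Q, (inner ℝ x q.1 : ℝ) ≤ q.2 := by
    intro q hq x hx
    rw [hQeq] at hx
    simpa using Set.mem_iInter₂.1 hx q hq
  -- Key lemma A : each P-constraint admits a point of Q
  have keyA : ∀ q ∈ FP, ∃ x ∈ Q, (inner ℝ x q.1 : ℝ) ≤ q.2 := by
    intro q hq
    obtain ⟨hq0, v, hvL, hqv⟩ := hFP q hq
    obtain ⟨x₀, hx₀Q, hmin⟩ := hQc.exists_isMinOn hQne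
      ((continuous_id.inner continuous_const : Continuous fun x : Pl => (inner ℝ x q.1 : ℝ)).continuousOn)
    refine ⟨x₀, hx₀Q, ?_⟩
    by_contra hgt
    push_neg at hgt
    obtain ⟨x, hxQ, hx⟩ := hcon v hvL q.1 hq0 hqv (inner ℝ x₀ q.1)
      (fun y hy => le_of_lt (lt_of_le_of_lt (hPsub q hq y hy) hgt))
    exact absurd (hmin hxQ) (not_le.mpr hx)
  -- Key lemma B : each Q-constraint admits a point of P
  have keyB : ∀ q ∈ FQ, ∃ x ∈ P, (inner ℝ x q.1 : ℝ) ≤ q.2 := by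
    intro q hq
    obtain ⟨hq0, v, hvL, hqv⟩ := hFQ q hq
    obtain ⟨x₀, hx₀P, hmin⟩ := hPc.exists_isMinOn hPne
      ((continuous_id.inner continuous_const : Continuous fun x : Pl => (inner ℝ x q.1 : ℝ)).continuousOn)
    refine ⟨x₀, hx₀P, ?_⟩
    by_contra hgt
    push_neg at hgt
    have hnv : (inner ℝ (-q.1) v : ℝ) = 0 := by rw [inner_neg_left, hqv, neg_zero]
    obtain ⟨x, hxQ, hx⟩ := hcon v hvL (-q.1) (neg_ne_zero.mpr hq0) hnv (-(inner ℝ x₀ q.1 : ℝ))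
      (fun y hy => by
        rw [inner_neg_right]
        exact neg_le_neg (hmin hy))
    rw [inner_neg_right, neg_lt_neg_iff] at hx
    exact absurd (hQsub q hq x hxQ) (not_le.mpr (lt_trans hgt hx))
  -- Helly
  have hrank : Module.finrank ℝ Pl = 2 := finrank_euclideanSpace_fin
  have hhelly : (⋂ q ∈ FP ∪ FQ, {x : Pl | (inner ℝ x q.1 : ℝ) ≤ q.2}).Nonempty := by
    apply Convex.helly_theorem' (𝕜 := ℝ)
    · intro q hq
      exact convex_halfSpace_le ⟨fun a b => inner_add_left a b q.1,
        fun r a => real_inner_smul_left a q.1 r⟩ q.2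
    · intro I hI hIcard
      rw [hrank] at hIcard
      -- one of I \ FP, I \ FQ has card ≤ 1
      have hdle : (I \ FP).card + (I \ FQ).card ≤ I.card := by
        rw [← Finset.card_union_of_disjoint]
        · apply Finset.card_le_card
          intro a ha
          simp only [Finset.mem_union, Finset.mem_sdiff] at ha
          rcases ha with ⟨h, _⟩ | ⟨h, _⟩ <;> exact h
        · rw [Finset.disjoint_left]
          intro a ha hb
          simp only [Finset.mem_sdiff] at ha hb
          rcases Finset.mem_union.1 (hI ha.1) with h | h
          · exact ha.2 h
          · exact hb.2 h
      rcases le_or_gt (I \ FQ).card 1 with hc | hc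
      · -- at most one constraint outside FQ ; use a point of Q
        rcases Finset.card_le_one_iff_subset_singleton.1 hc with ⟨q₀, hq₀⟩
        rcases Finset.eq_empty_or_nonempty (I \ FQ) with he | hne
        · obtain ⟨x, hxQ⟩ := hQne
          refine ⟨x, Set.mem_iInter₂.2 fun q hq => ?_⟩
          have hqFQ : q ∈ FQ := by
            by_contra h
            exact Finset.notMem_empty q (he ▸ Finset.mem_sdiff.mpr ⟨hq, h⟩)
          exact hQsub q hqFQ x hxQ
        · obtain ⟨a, haI⟩ := hne
          have haq₀ : a = q₀ := by simpa using hq₀ haI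
          subst haq₀
          have haFP : a ∈ FP := by
            rcases Finset.mem_union.1 (hI (Finset.mem_sdiff.1 haI).1) with h | h
            · exact h
            · exact absurd h (Finset.mem_sdiff.1 haI).2
          obtain ⟨x, hxQ, hxa⟩ := keyA a haFP
          refine ⟨x, Set.mem_iInter₂.2 fun q hq => ?_⟩
          by_cases hqFQ : q ∈ FQ
          · exact hQsub q hqFQ x hxQ
          · have : q = a := by simpa using hq₀ (Finset.mem_sdiff.mpr ⟨hq, hqFQ⟩)
            subst this
            exact hxa
      · -- then (I \ FP).card ≤ 1 ; use a point of P
        have hc' : (I \ FP).card ≤ 1 := by omega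
        rcases Finset.card_le_one_iff_subset_singleton.1 hc' with ⟨q₀, hq₀⟩
        rcases Finset.eq_empty_or_nonempty (I \ FP) with he | hne
        · obtain ⟨x, hxP⟩ := hPne
          refine ⟨x, Set.mem_iInter₂.2 fun q hq => ?_⟩
          have hqFP : q ∈ FP := by
            by_contra h
            exact Finset.notMem_empty q (he ▸ Finset.mem_sdiff.mpr ⟨hq, h⟩)
          exact hPsub q hqFP x hxP
        · obtain ⟨a, haI⟩ := hne
          have haq₀ : a = q₀ := by simpa using hq₀ haI
          subst haq₀
          have haFQ : a ∈ FQ := by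
            rcases Finset.mem_union.1 (hI (Finset.mem_sdiff.1 haI).1) with h | h
            · exact absurd h (Finset.mem_sdiff.1 haI).2
            · exact h
          obtain ⟨x, hxP, hxa⟩ := keyB a haFQ
          refine ⟨x, Set.mem_iInter₂.2 fun q hq => ?_⟩
          by_cases hqFP : q ∈ FP
          · exact hPsub q hqFP x hxP
          · have : q = a := by simpa using hq₀ (Finset.mem_sdiff.mpr ⟨hq, hqFP⟩)
            subst this
            exact hxa
  obtain ⟨x, hx⟩ := hhelly
  have hxP : x ∈ P := by
    rw [hPeq]
    exact Set.mem_iInter₂.2 fun q hq => Set.mem_iInter₂.1 hx q (Finset.mem_union_left _ hq)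
  have hxQ : x ∈ Q := by
    rw [hQeq]
    exact Set.mem_iInter₂.2 fun q hq => Set.mem_iInter₂.1 hx q (Finset.mem_union_right _ hq)
  exact Set.disjoint_left.1 hdisj hxP hxQ
end
end

section
/- The graph S_k, consisting of a (2k+1)-clique together with a pendant (degree-1) neighbor attached to each clique vertex, is not a k-DIR graph: it has no intersection representation by segments parallel to at most k directions. -/
noncomputable section

lemma seg_line {u p q : Pl} {t : ℝ} (h : q - p = t • u) {x : Pl}
    (hx : x ∈ segment ℝ p q) : ∃ s : ℝ, x = p + s • u := by
  obtain ⟨a, b, ha, hb, hab, hx⟩ := hx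
  have hq : q = t • u + p := sub_eq_iff_eq_add.mp h
  refine ⟨b * t, ?_⟩
  have haa : a = 1 - b := by linarith
  subst haa
  rw [← hx, hq]
  module

lemma helperR {A C : Set ℝ} (hA : Convex ℝ A) (hC : Convex ℝ C)
    (hAC : (A ∩ C).Nonempty) {x y z : ℝ} (hx : x ∈ A) (hz : z ∈ C)
    (hxy : x ≤ y) (hyz : y ≤ z) (hyA : y ∉ A) (hyC : y ∉ C) : False := by
  obtain ⟨w, hwA, hwC⟩ := hAC
  rcases le_total y w with h | h
  · exact hyA (hA.ordConnected.out hx hwA ⟨hxy, h⟩)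
  · exact hyC (hC.ordConnected.out hwC hz ⟨h, hyz⟩)

lemma keyR {A B C : Set ℝ} (hA : Convex ℝ A) (hB : Convex ℝ B) (hC : Convex ℝ C)
    (iAB : (A ∩ B).Nonempty) (iAC : (A ∩ C).Nonempty) (iBC : (B ∩ C).Nonempty)
    {a b c : ℝ} (haA : a ∈ A) (hbB : b ∈ B) (hcC : c ∈ C)
    (haB : a ∉ B) (haC : a ∉ C) (hbA : b ∉ A) (hbC : b ∉ C)
    (hcA : c ∉ A) (hcB : c ∉ B) : False := by
  have iBA : (B ∩ A).Nonempty := iAB.imp fun w hw => ⟨hw.2, hw.1⟩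
  have iCA : (C ∩ A).Nonempty := iAC.imp fun w hw => ⟨hw.2, hw.1⟩
  have iCB : (C ∩ B).Nonempty := iBC.imp fun w hw => ⟨hw.2, hw.1⟩
  rcases le_total a b with h1 | h1 <;> rcases le_total b c with h2 | h2 <;>
    rcases le_total a c with h3 | h3
  · exact helperR hA hC iAC haA hcC h1 h2 hbA hbC
  · exact helperR hA hC iAC haA hcC h1 h2 hbA hbC
  · exact helperR hA hB iAB haA hbB h3 h2 hcA hcB
  · exact helperR hC hB iCB hcC hbB h3 h1 haC haB
  · exact helperR hB hC iBC hbB hcC h1 h3 haB haC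
  · exact helperR hB hA iBA hbB haA h2 h3 hcB hcA
  · exact helperR hC hA iCA hcC haA h2 h1 hbC hbA
  · exact helperR hC hA iCA hcC haA h2 h1 hbC hbA

/-- The graph `S_k` — a `(2k+1)`-clique `c₁,…,c_{2k+1}` with a pendant neighbor `pᵢ` attached
to each clique vertex — has no intersection representation by segments parallel to at most
`k` directions: there is no family of segments `C i` (for the clique) and `P i` (for the
pendants), each parallel to one of `k` nonzero direction vectors, such that the `C i`
pairwise intersect, `P i` meets `C j` iff `i = j`, and the `P i` are pairwise disjoint. -/
theorem stmt10 (k : ℕ) (hk : 1 ≤ k) (v : Fin k → Pl) (hv : ∀ i, v i ≠ 0)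
    (ca cb pa pb : Fin (2 * k + 1) → Pl)
    (dc dp : Fin (2 * k + 1) → Fin k)
    (hcd : ∀ i, ∃ t : ℝ, cb i - ca i = t • v (dc i))
    (hpd : ∀ i, ∃ t : ℝ, pb i - pa i = t • v (dp i))
    (hclique : ∀ i j, (segment ℝ (ca i) (cb i) ∩ segment ℝ (ca j) (cb j)).Nonempty)
    (hpend : ∀ i j, ((segment ℝ (pa i) (pb i) ∩ segment ℝ (ca j) (cb j)).Nonempty ↔ i = j))
    (hpp : ∀ i j, i ≠ j → ¬ (segment ℝ (pa i) (pb i) ∩ segment ℝ (pa j) (pb j)).Nonempty) :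
    False := by
  -- pigeonhole: three indices with the same direction
  obtain ⟨d, hd⟩ : ∃ d : Fin k, 2 < (Finset.univ.filter fun m => dc m = d).card := by
    apply Fintype.exists_lt_card_fiber_of_mul_lt_card
    simp only [Fintype.card_fin]
    omega
  rw [Finset.two_lt_card_iff] at hd
  obtain ⟨i, j, l, hi, hj, hl, hij, hil, hjl⟩ := hd
  simp only [Finset.mem_filter, Finset.mem_univ, true_and] at hi hj hl
  set u := v d with hu_def
  have hu : u ≠ 0 := hv d
  -- each of the three clique segments has direction u
  have hdir : ∀ m, dc m = d → ∃ t : ℝ, cb m - ca m = t • u := by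
    intro m hm
    obtain ⟨t, ht⟩ := hcd m
    exact ⟨t, by rw [ht, hm]⟩
  -- every point of such a segment lies on the line through `ca i` with direction u
  have mem_line : ∀ m, dc m = d → ∀ x ∈ segment ℝ (ca m) (cb m),
      ∃ s : ℝ, x = ca i + s • u := by
    intro m hm x hx
    obtain ⟨t, ht⟩ := hdir m hm
    obtain ⟨z, hz1, hz2⟩ := hclique i m
    obtain ⟨ti, hti⟩ := hdir i hi
    obtain ⟨a, ha⟩ := seg_line hti hz1
    obtain ⟨b, hb⟩ := seg_line ht hz2
    have hcam : ca m = ca i + (a - b) • u := by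
      have h : ca i + a • u = ca m + b • u := ha.symm.trans hb
      have h2 : ca m = (ca i + a • u) - b • u := by rw [h]; abel
      rw [h2]; module
    obtain ⟨s', hs'⟩ := seg_line ht hx
    refine ⟨(a - b) + s', ?_⟩
    rw [hs', hcam]
    module
  -- the coordinate intervals
  set I : Fin (2 * k + 1) → Set ℝ :=
    fun m => {s : ℝ | ca i + s • u ∈ segment ℝ (ca m) (cb m)} with hI_def
  have hconv : ∀ m, Convex ℝ (I m) := by
    intro m
    have : I m = (AffineMap.lineMap (ca i) (ca i + u)) ⁻¹'
        segment ℝ (ca m) (cb m) := by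
      ext s
      have hl : (AffineMap.lineMap (ca i) (ca i + u) : ℝ →ᵃ[ℝ] Pl) s = ca i + s • u := by
        rw [AffineMap.lineMap_apply, vsub_eq_sub, vadd_eq_add, add_sub_cancel_left, add_comm]
      simp [hI_def, Set.mem_preimage, hl]
    rw [this]
    exact (convex_segment _ _).affine_preimage _
  have hint : ∀ m n, dc m = d → (I m ∩ I n).Nonempty := by
    intro m n hm
    obtain ⟨z, hz1, hz2⟩ := hclique m n
    obtain ⟨s, hs⟩ := mem_line m hm z hz1
    exact ⟨s, by simpa [hI_def, ← hs] using hz1, by simpa [hI_def, ← hs] using hz2⟩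
  have hmem : ∀ m, dc m = d → ∃ s, s ∈ I m ∧ ∀ n, m ≠ n → s ∉ I n := by
    intro m hm
    obtain ⟨q, hq1, hq2⟩ := ((hpend m m).mpr rfl)
    obtain ⟨s, hs⟩ := mem_line m hm q hq2
    refine ⟨s, by simpa [hI_def, ← hs] using hq2, ?_⟩
    intro n hne hsIn
    exact hne ((hpend m n).mp ⟨q, hq1, by rw [hs]; exact hsIn⟩)
  obtain ⟨si, hsi, hsi'⟩ := hmem i hi
  obtain ⟨sj, hsj, hsj'⟩ := hmem j hj
  obtain ⟨sl, hsl, hsl'⟩ := hmem l hl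
  exact keyR (hconv i) (hconv j) (hconv l)
    (hint i j hi) (hint i l hi) (hint j l hj)
    hsi hsj hsl
    (hsi' j hij) (hsi' l hil) (hsj' i (Ne.symm hij)) (hsj' l hjl)
    (hsl' i (Ne.symm hil)) (hsl' j (Ne.symm hjl))
end
end

section
/- If three pairwise intersecting segments lie on a common line, then at most two of them can have 'private neighbors', i.e., it is impossible to have three additional segments t₁, t₂, t₃ with tᵢ intersecting only the i-th collinear segment and no other. -/
noncomputable section

/-- Helly-type fact for three intervals: one is contained in the union of two others. -/
lemma key_intervals (L R : Fin 3 → ℝ) (hp : ∀ i j, L i ≤ R j) :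
    ∃ k i j : Fin 3, i ≠ k ∧ j ≠ k ∧
      Set.Icc (L k) (R k) ⊆ Set.Icc (L i) (R i) ∪ Set.Icc (L j) (R j) := by
  obtain ⟨i₀, -, hi₀⟩ := Finset.exists_min_image (Finset.univ : Finset (Fin 3)) L ⟨0, by simp⟩
  obtain ⟨j₀, -, hj₀⟩ := Finset.exists_max_image (Finset.univ : Finset (Fin 3)) R ⟨0, by simp⟩
  have hk : ∀ i j : Fin 3, ∃ k, k ≠ i ∧ k ≠ j := by decide
  obtain ⟨k, hki, hkj⟩ := hk i₀ j₀
  refine ⟨k, i₀, j₀, fun h => hki h.symm, fun h => hkj h.symm, ?_⟩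
  intro x hx
  rcases le_or_gt x (R i₀) with h | h
  · exact Or.inl ⟨le_trans (hi₀ k (by simp)) hx.1, h⟩
  · exact Or.inr ⟨le_trans (hp j₀ i₀) h.le, le_trans hx.2 (hj₀ k (by simp))⟩

/-- If three pairwise intersecting segments all lie on a common line, then they cannot all
have private neighbors: there are no segments `t₁, t₂, t₃` such that `tᵢ` intersects the
`i`-th collinear segment and is disjoint from the other two. -/
theorem stmt11 (p v : Pl) (hv : v ≠ 0) (a b : Fin 3 → Pl)
    (hline : ∀ i, (∃ t : ℝ, a i = p + t • v) ∧ (∃ t : ℝ, b i = p + t • v))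
    (hint : ∀ i j : Fin 3, (segment ℝ (a i) (b i) ∩ segment ℝ (a j) (b j)).Nonempty)
    (ta tb : Fin 3 → Pl)
    (hpriv : ∀ i j : Fin 3,
      ((segment ℝ (ta i) (tb i) ∩ segment ℝ (a j) (b j)).Nonempty ↔ i = j)) :
    False := by
  classical
  have h1 : ∀ i, ∃ t : ℝ, a i = p + t • v := fun i => (hline i).1
  have h2 : ∀ i, ∃ t : ℝ, b i = p + t • v := fun i => (hline i).2
  choose α hα using h1
  choose β hβ using h2
  set f : ℝ →ᵃ[ℝ] Pl := AffineMap.lineMap p (p + v) with hf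
  have hfap : ∀ t : ℝ, (f t : Pl) = p + t • v := by
    intro t
    simp [hf, AffineMap.lineMap_apply, add_comm]
  have hfinj : Function.Injective f := by
    apply AffineMap.lineMap_injective
    intro h
    exact hv (by simpa using h.symm)
  set L : Fin 3 → ℝ := fun i => min (α i) (β i) with hL
  set R : Fin 3 → ℝ := fun i => max (α i) (β i) with hR
  have hseg : ∀ i, segment ℝ (a i) (b i) = f '' Set.Icc (L i) (R i) := by
    intro i
    rw [hα i, hβ i, ← hfap, ← hfap, ← image_segment, segment_eq_uIcc, Set.uIcc]
  have hp : ∀ i j, L i ≤ R j := by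
    intro i j
    obtain ⟨q, hqi, hqj⟩ := hint i j
    rw [hseg i] at hqi
    rw [hseg j] at hqj
    obtain ⟨x, hx, hxq⟩ := hqi
    obtain ⟨y, hy, hyq⟩ := hqj
    have : x = y := hfinj (by rw [hxq, hyq])
    subst this
    exact le_trans hx.1 hy.2
  obtain ⟨k, i, j, hik, hjk, hsub⟩ := key_intervals L R hp
  obtain ⟨q, hqt, hqs⟩ := (hpriv k k).mpr rfl
  rw [hseg k] at hqs
  obtain ⟨x, hx, hxq⟩ := hqs
  rcases hsub hx with h | h
  · exact hik ((hpriv k i).mp ⟨q, hqt, by rw [hseg i]; exact ⟨x, h, hxq⟩⟩).symm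
  · exact hjk ((hpriv k j).mp ⟨q, hqt, by rw [hseg j]; exact ⟨x, h, hxq⟩⟩).symm
end
end

section
/- For any two nonempty disjoint convex polytopes P₁ and P₂ in ℝ^d, there exists a separating hyperplane H parallel to a d₁-dimensional face of P₁ and to a d₂-dimensional face of P₂ with d₁ + d₂ ≥ d − 1 (where faces of dimension 0 are vertices); in particular, disjoint full-dimensional convex polytopes can be separated by a hyperplane parallel to an i-dimensional face of one and a (d−1−i)-dimensional face of the other for some i. -/
noncomputable section

variable {d : ℕ}

/-- A (compact convex) polytope: the convex hull of a finite set of points. -/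
def IsPolytope (P : Set (EuclideanSpace ℝ (Fin d))) : Prop :=
  ∃ F : Finset (EuclideanSpace ℝ (Fin d)), P = convexHull ℝ (F : Set (EuclideanSpace ℝ (Fin d)))

/-- The dimension of a subset of `ℝ^d`: the dimension of its affine span. -/
noncomputable def sdim (A : Set (EuclideanSpace ℝ (Fin d))) : ℕ :=
  Module.finrank ℝ (affineSpan ℝ A).direction


section Wright
set_option linter.unusedSectionVars false
set_option maxHeartbeats 1000000

open Finset Module Submodule
open scoped RealInnerProductSpace Classical Pointwise

variable {E : Type*} [NormedAddCommGroup E] [InnerProductSpace ℝ E] [FiniteDimensional ℝ E]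

noncomputable def wArgmin (S : Finset E) (w : E) : Finset E :=
  S.filter (fun s => ∀ s' ∈ S, ⟪s, w⟫ ≤ ⟪s', w⟫)

lemma wArgmin_subset (S : Finset E) (w : E) : wArgmin S w ⊆ S := Finset.filter_subset _ _

lemma wArgmin_nonempty (S : Finset E) (hS : S.Nonempty) (w : E) : (wArgmin S w).Nonempty := by
  obtain ⟨b, hb, hmin⟩ := S.exists_min_image (fun s => ⟪s, w⟫) hS
  exact ⟨b, Finset.mem_filter.2 ⟨hb, hmin⟩⟩

lemma mem_wArgmin_iff {S : Finset E} {w s : E} :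
    s ∈ wArgmin S w ↔ s ∈ S ∧ ∀ s' ∈ S, ⟪s, w⟫ ≤ ⟪s', w⟫ := Finset.mem_filter

lemma wArgmin_inner_eq {S : Finset E} {w s t : E} (hs : s ∈ wArgmin S w)
    (ht : t ∈ wArgmin S w) : ⟪s, w⟫ = ⟪t, w⟫ := by
  rcases mem_wArgmin_iff.1 hs with ⟨hs1, hs2⟩
  rcases mem_wArgmin_iff.1 ht with ⟨ht1, ht2⟩
  exact le_antisymm (hs2 t ht1) (ht2 s hs1)

/-- The rotation move: rotate `w` towards `u` until a new point joins the argmin face. -/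
lemma wright_move (S : Finset E) (w u s₀ : E) (hs₀ : s₀ ∈ wArgmin S w)
    (hT : ∀ s ∈ wArgmin S w, ⟪s, u⟫ = ⟪s₀, u⟫)
    (hcross : ∃ s ∈ S, ⟪s, u⟫ < ⟪s₀, u⟫) :
    ∃ t : ℝ, 0 < t ∧
      (∀ s ∈ S, ⟪s₀, w⟫ + t * ⟪s₀, u⟫ ≤ ⟪s, w + t • u⟫) ∧
      wArgmin S w ⊂ wArgmin S (w + t • u) := by
  classical
  set c : ℝ := ⟪s₀, u⟫ with hc
  set m : ℝ := ⟪s₀, w⟫ with hm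
  have hs₀S : s₀ ∈ S := wArgmin_subset S w hs₀
  have hmin : ∀ s ∈ S, m ≤ ⟪s, w⟫ := (mem_wArgmin_iff.1 hs₀).2
  set N : Finset E := S.filter (fun s => ⟪s, u⟫ < c) with hN
  obtain ⟨sc, hscS, hscu⟩ := hcross
  have hNne : N.Nonempty := ⟨sc, Finset.mem_filter.2 ⟨hscS, hscu⟩⟩
  have hNnotT : ∀ s ∈ N, s ∉ wArgmin S w := by
    intro s hsN hsT
    have := hT s hsT
    have h2 := (Finset.mem_filter.1 hsN).2
    linarith
  have hNgap : ∀ s ∈ N, m < ⟪s, w⟫ := by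
    intro s hsN
    rcases lt_or_eq_of_le (hmin s (Finset.mem_filter.1 hsN).1) with h | h
    · exact h
    · exfalso
      apply hNnotT s hsN
      refine mem_wArgmin_iff.2 ⟨(Finset.mem_filter.1 hsN).1, ?_⟩
      intro s' hs'
      rw [← h]; exact hmin s' hs'
  set f : E → ℝ := fun s => (⟪s, w⟫ - m) / (c - ⟪s, u⟫) with hf
  set t : ℝ := N.inf' hNne f with ht
  have hfpos : ∀ s ∈ N, 0 < f s := by
    intro s hsN
    have h1 := hNgap s hsN
    have h2 := (Finset.mem_filter.1 hsN).2
    exact div_pos (by linarith) (by linarith)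
  have htpos : 0 < t := (Finset.lt_inf'_iff hNne).2 hfpos
  refine ⟨t, htpos, ?_, ?_⟩
  · -- lower bound on all values
    intro s hsS
    have hv : ⟪s, w + t • u⟫ = ⟪s, w⟫ + t * ⟪s, u⟫ := by
      rw [inner_add_right, real_inner_smul_right]
    rw [hv]
    by_cases hsu : ⟪s, u⟫ < c
    · have hsN : s ∈ N := Finset.mem_filter.2 ⟨hsS, hsu⟩
      have hle : t ≤ f s := Finset.inf'_le f hsN
      have hden : 0 < c - ⟪s, u⟫ := by linarith
      have := (le_div_iff₀ hden).1 hle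
      nlinarith
    · push_neg at hsu
      have h1 := hmin s hsS
      nlinarith
  · -- strict inclusion of argmin sets
    obtain ⟨smin, hsminN, hsmineq⟩ := Finset.exists_mem_eq_inf' hNne f
    have hsminS : smin ∈ S := (Finset.mem_filter.1 hsminN).1
    have hlb : ∀ s ∈ S, m + t * c ≤ ⟪s, w + t • u⟫ := by
      intro s hsS
      have hv : ⟪s, w + t • u⟫ = ⟪s, w⟫ + t * ⟪s, u⟫ := by
        rw [inner_add_right, real_inner_smul_right]
      rw [hv]
      by_cases hsu : ⟪s, u⟫ < c
      · have hsN : s ∈ N := Finset.mem_filter.2 ⟨hsS, hsu⟩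
        have hle : t ≤ f s := Finset.inf'_le f hsN
        have hden : 0 < c - ⟪s, u⟫ := by linarith
        have := (le_div_iff₀ hden).1 hle
        nlinarith
      · push_neg at hsu
        have h1 := hmin s hsS
        nlinarith
    have hTval : ∀ s ∈ wArgmin S w, ⟪s, w + t • u⟫ = m + t * c := by
      intro s hsT
      have h1 : ⟪s, w⟫ = m := wArgmin_inner_eq hsT hs₀
      have h2 := hT s hsT
      rw [inner_add_right, real_inner_smul_right, h1, h2]
    have hsminval : ⟪smin, w + t • u⟫ = m + t * c := by
      have h2 := (Finset.mem_filter.1 hsminN).2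
      have hden : 0 < c - ⟪smin, u⟫ := by linarith
      have hts : t = (⟪smin, w⟫ - m) / (c - ⟪smin, u⟫) := hsmineq
      rw [inner_add_right, real_inner_smul_right]
      field_simp at hts
      nlinarith [hts]
    have hmemT' : ∀ s, s ∈ S → ⟪s, w + t • u⟫ = m + t * c → s ∈ wArgmin S (w + t • u) := by
      intro s hsS hval
      refine mem_wArgmin_iff.2 ⟨hsS, ?_⟩
      intro s' hs'
      rw [hval]
      exact hlb s' hs'
    constructor
    · intro s hsT
      exact hmemT' s (wArgmin_subset S w hsT) (hTval s hsT)
    · intro hsub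
      exact hNnotT smin hsminN (hsub (hmemT' smin hsminS hsminval))

lemma real_inner_self_pos' {x : E} (hx : x ≠ 0) : 0 < ⟪x, x⟫ :=
  lt_of_le_of_ne real_inner_self_nonneg (fun h => hx (inner_self_eq_zero.1 h.symm))

lemma exists_orth {Z : Submodule ℝ E} {x : E} (hx : x ∉ Z) : ∃ u ∈ Zᗮ, ⟪x, u⟫ ≠ 0 := by
  by_contra h
  push_neg at h
  apply hx
  rw [← Submodule.orthogonal_orthogonal Z]
  exact (Submodule.mem_orthogonal' _ _).2 h

/-- The key step: if the argmin face has codimension ≥ 2 in `span S`, the supporting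
functional can be rotated so that the argmin face strictly grows. -/
lemma wright_step (S : Finset E) (w : E) (hw0 : w ≠ 0) (hw : ∀ s ∈ S, 0 ≤ ⟪s, w⟫)
    (hdim : finrank ℝ (vectorSpan ℝ ((wArgmin S w : Finset E) : Set E)) + 2 ≤
      finrank ℝ (Submodule.span ℝ (S : Set E))) :
    ∃ w' : E, w' ≠ 0 ∧ (∀ s ∈ S, 0 ≤ ⟪s, w'⟫) ∧ wArgmin S w ⊂ wArgmin S w' := by
  classical
  have hSne : S.Nonempty := by
    rcases S.eq_empty_or_nonempty with rfl | h
    · exfalso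
      rw [Finset.coe_empty, Submodule.span_empty, finrank_bot] at hdim
      omega
    · exact h
  obtain ⟨s₀, hs₀⟩ := wArgmin_nonempty S hSne w
  have hs₀S : s₀ ∈ S := wArgmin_subset S w hs₀
  set T : Finset E := wArgmin S w with hTdef
  set U : Submodule ℝ E := vectorSpan ℝ ((T : Finset E) : Set E) with hUdef
  have hUdiff : ∀ s ∈ T, s - s₀ ∈ U := by
    intro s hs
    have := vsub_mem_vectorSpan ℝ (Finset.mem_coe.2 hs) (Finset.mem_coe.2 hs₀)
    simpa [vsub_eq_sub] using this
  have hwT : ∀ x ∈ U, ⟪x, w⟫ = 0 := by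
    have hle : U ≤ (ℝ ∙ w)ᗮ := by
      rw [hUdef, vectorSpan_def]
      apply Submodule.span_le.2
      intro x hx
      rcases Set.mem_vsub.1 hx with ⟨a, ha, b, hb, rfl⟩
      have hab : ⟪a, w⟫ = ⟪b, w⟫ :=
        wArgmin_inner_eq (Finset.mem_coe.1 ha) (Finset.mem_coe.1 hb)
      have : ⟪a - b, w⟫ = 0 := by rw [inner_sub_left]; linarith
      simpa [vsub_eq_sub] using Submodule.mem_orthogonal_singleton_iff_inner_left.2 this
    intro x hx
    exact Submodule.mem_orthogonal_singleton_iff_inner_left.1 (hle hx)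
  set Z₀ : Submodule ℝ E := U ⊔ (ℝ ∙ s₀) with hZ₀def
  set Z₁ : Submodule ℝ E := U ⊔ (ℝ ∙ w) with hZ₁def
  set Z : Submodule ℝ E := Z₀ ⊔ (ℝ ∙ w) with hZdef
  have hrank1 : ∀ x : E, finrank ℝ (ℝ ∙ x) ≤ 1 := by
    intro x
    rcases eq_or_ne x 0 with rfl | hx
    · rw [Submodule.span_zero_singleton]; simp
    · rw [finrank_span_singleton hx]
  have hsupbound : ∀ x : E, finrank ℝ ↥(U ⊔ (ℝ ∙ x)) ≤ finrank ℝ U + 1 := by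
    intro x
    refine le_trans (Submodule.finrank_add_le_finrank_add_finrank _ _) ?_
    have := hrank1 x
    omega
  have hex : ∀ Z' : Submodule ℝ E, finrank ℝ Z' < finrank ℝ (Submodule.span ℝ (S : Set E)) →
      ∃ s ∈ S, s ∉ Z' := by
    intro Z' hZ'
    by_contra h
    push_neg at h
    have hle : Submodule.span ℝ (S : Set E) ≤ Z' :=
      Submodule.span_le.2 (fun s hs => h s (Finset.mem_coe.1 hs))
    have := Submodule.finrank_mono hle
    omega
  by_cases hall : ∀ s ∈ S, s ∈ Z
  · -- Case II : everything inside Z = U ⊔ ℝ∙s₀ ⊔ ℝ∙w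
    have hs₀Z₁ : s₀ ∉ Z₁ := by
      intro hmem
      have hZle : Z ≤ Z₁ := by
        rw [hZdef, hZ₀def]
        refine sup_le (sup_le ?_ ?_) ?_
        · exact le_sup_left
        · exact (Submodule.span_singleton_le_iff_mem _ _).2 hmem
        · exact le_sup_right
      have hle : Submodule.span ℝ (S : Set E) ≤ Z₁ :=
        le_trans (Submodule.span_le.2 (fun s hs => hZle (hall s (Finset.mem_coe.1 hs)))) le_rfl
      have h1 := Submodule.finrank_mono hle
      have h2 := hsupbound w
      rw [← hZ₁def] at h2
      omega
    obtain ⟨u₀, hu₀Z₁, hu₀s₀⟩ := exists_orth hs₀Z₁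
    set v : E := if 0 < ⟪s₀, u₀⟫ then u₀ else -u₀ with hvdef
    have hvZ₁ : v ∈ Z₁ᗮ := by
      rw [hvdef]; split_ifs
      · exact hu₀Z₁
      · exact neg_mem hu₀Z₁
    have hρpos : 0 < ⟪s₀, v⟫ := by
      rw [hvdef]; split_ifs with h
      · exact h
      · rw [inner_neg_right]
        rcases hu₀s₀.lt_or_gt with h' | h'
        · linarith
        · exact absurd h' h
    set ρ : ℝ := ⟪s₀, v⟫ with hρdef
    have hZ₁v : ∀ z ∈ Z₁, ⟪z, v⟫ = 0 := fun z hz => (Submodule.mem_orthogonal Z₁ v).1 hvZ₁ z hz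
    have hUv : ∀ x ∈ U, ⟪x, v⟫ = 0 := fun x hx => hZ₁v x (Submodule.mem_sup_left hx)
    have hwv : ⟪w, v⟫ = 0 := hZ₁v w (Submodule.mem_sup_right (Submodule.mem_span_singleton_self w))
    have hvne : v ≠ 0 := by
      intro h
      rw [hρdef, h, inner_zero_right] at hρpos
      exact lt_irrefl 0 hρpos
    obtain ⟨s₂, hs₂S, hs₂Z₀⟩ := hex Z₀ (by
      have := hsupbound s₀
      rw [← hZ₀def] at this
      omega)
    have hs₂Z : s₂ ∈ Z := hall s₂ hs₂S
    rcases Submodule.mem_sup.1 hs₂Z with ⟨y, hy, v', hv', hsum⟩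
    rcases Submodule.mem_span_singleton.1 hv' with ⟨δ, rfl⟩
    rcases Submodule.mem_sup.1 hy with ⟨x, hx, r, hr, hsum'⟩
    rcases Submodule.mem_span_singleton.1 hr with ⟨γ, rfl⟩
    have hs₂eq : s₂ = x + γ • s₀ + δ • w := by rw [← hsum, ← hsum']
    have hδ : δ ≠ 0 := by
      rintro rfl
      apply hs₂Z₀
      rw [hs₂eq, zero_smul, add_zero]
      exact add_mem (Submodule.mem_sup_left hx)
        (Submodule.smul_mem _ _ (Submodule.mem_sup_right (Submodule.mem_span_singleton_self s₀)))
    set m : ℝ := ⟪s₀, w⟫ with hmdef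
    have hm0 : 0 ≤ m := hw s₀ hs₀S
    set W : ℝ := ⟪w, w⟫ with hWdef
    have hW : 0 < W := real_inner_self_pos' hw0
    have hxv : ⟪x, v⟫ = 0 := hUv x hx
    have hxw : ⟪x, w⟫ = 0 := hwT x hx
    have hs₂w : ⟪s₂, w⟫ = γ * m + δ * W := by
      rw [hs₂eq, inner_add_left, inner_add_left, real_inner_smul_left, real_inner_smul_left,
        hxw, ← hmdef, ← hWdef]
      ring
    have hs₂v : ⟪s₂, v⟫ = γ * ρ := by
      rw [hs₂eq, inner_add_left, inner_add_left, real_inner_smul_left, real_inner_smul_left,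
        hxv, hwv, ← hρdef]
      ring
    rcases hm0.lt_or_eq with hmpos | hmzero
    · -- m > 0
      set u : E := (δ * m / ρ) • v + (-δ) • w with hudef
      have hs₀u : ⟪s₀, u⟫ = 0 := by
        rw [hudef, inner_add_right, real_inner_smul_right, real_inner_smul_right,
          ← hρdef, ← hmdef]
        field_simp
        ring
      have hTu : ∀ s ∈ T, ⟪s, u⟫ = ⟪s₀, u⟫ := by
        intro s hs
        have hd := hUdiff s hs
        have h1 : ⟪s - s₀, u⟫ = 0 := by
          rw [hudef, inner_add_right, real_inner_smul_right, real_inner_smul_right,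
            hUv _ hd, hwT _ hd]
          ring
        rw [inner_sub_left] at h1
        linarith
      have hcross : ∃ s ∈ S, ⟪s, u⟫ < ⟪s₀, u⟫ := by
        refine ⟨s₂, hs₂S, ?_⟩
        have hs₂u : ⟪s₂, u⟫ = -(δ^2 * W) := by
          rw [hudef, inner_add_right, real_inner_smul_right, real_inner_smul_right,
            hs₂v, hs₂w]
          field_simp
          ring
        rw [hs₂u, hs₀u]
        have : 0 < δ^2 * W := by positivity
        linarith
      obtain ⟨t, htpos, hlow, hsub⟩ := wright_move S w u s₀ hs₀ hTu hcross
      refine ⟨w + t • u, ?_, ?_, hsub⟩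
      · intro h0
        have hvv : 0 < ⟪v, v⟫ := real_inner_self_pos' hvne
        have hexp : ⟪w + t • u, v⟫ =
            ⟪w, v⟫ + t * ((δ * m / ρ) * ⟪v, v⟫ + (-δ) * ⟪w, v⟫) := by
          rw [hudef, inner_add_left, real_inner_smul_left, inner_add_left,
            real_inner_smul_left, real_inner_smul_left]
        rw [h0, inner_zero_left, hwv] at hexp
        have hX : (δ * m / ρ) * ⟪v, v⟫ + (-δ) * (0:ℝ) ≠ 0 := by
          rw [mul_zero, add_zero]
          exact mul_ne_zero (div_ne_zero (mul_ne_zero hδ hmpos.ne') hρpos.ne') hvv.ne'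
        have ht0 : t * ((δ * m / ρ) * ⟪v, v⟫ + (-δ) * (0:ℝ)) = 0 := by linarith
        rcases mul_eq_zero.1 ht0 with h | h
        · exact htpos.ne' h
        · exact hX h
      · intro s hs
        have h1 := hlow s hs
        rw [hs₀u] at h1
        have hm' : (0:ℝ) ≤ ⟪s₀, w⟫ := hw s₀ hs₀S
        linarith
    · -- m = 0  (hmzero : 0 = m)
      set β : ℝ := -((γ - 1) * ρ + 1) / (δ * W) with hβdef
      set u : E := v + β • w with hudef
      have hs₀u : ⟪s₀, u⟫ = ρ := by
        rw [hudef, inner_add_right, real_inner_smul_right, ← hρdef, ← hmdef, ← hmzero]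
        ring
      have hTu : ∀ s ∈ T, ⟪s, u⟫ = ⟪s₀, u⟫ := by
        intro s hs
        have hd := hUdiff s hs
        have h1 : ⟪s - s₀, u⟫ = 0 := by
          rw [hudef, inner_add_right, real_inner_smul_right, hUv _ hd, hwT _ hd]
          ring
        rw [inner_sub_left] at h1
        linarith
      have hcross : ∃ s ∈ S, ⟪s, u⟫ < ⟪s₀, u⟫ := by
        refine ⟨s₂, hs₂S, ?_⟩
        have hβδW : β * (δ * W) = -((γ - 1) * ρ + 1) := by
          rw [hβdef]
          field_simp
        have hs₂u : ⟪s₂, u⟫ = ρ - 1 := by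
          rw [hudef, inner_add_right, real_inner_smul_right, hs₂v, hs₂w, ← hmzero]
          nlinarith [hβδW]
        rw [hs₂u, hs₀u]
        linarith
      obtain ⟨t, htpos, hlow, hsub⟩ := wright_move S w u s₀ hs₀ hTu hcross
      refine ⟨w + t • u, ?_, ?_, hsub⟩
      · intro h0
        have h1 := hlow s₀ hs₀S
        rw [h0, inner_zero_right, hs₀u] at h1
        have hm' : m = ⟪s₀, w⟫ := hmdef
        nlinarith [mul_pos htpos hρpos]
      · intro s hs
        have h1 := hlow s hs
        rw [hs₀u] at h1
        have hm' : m = ⟪s₀, w⟫ := hmdef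
        nlinarith [mul_pos htpos hρpos]
  · -- Case I : some point of S outside Z
    push_neg at hall
    obtain ⟨s₂, hs₂S, hs₂Z⟩ := hall
    obtain ⟨u₀, hu₀Z, hu₀s₂⟩ := exists_orth hs₂Z
    set u : E := if ⟪s₂, u₀⟫ < 0 then u₀ else -u₀ with hudef
    have huZ : u ∈ Zᗮ := by
      rw [hudef]; split_ifs
      · exact hu₀Z
      · exact neg_mem hu₀Z
    have hs₂u : ⟪s₂, u⟫ < 0 := by
      rw [hudef]; split_ifs with h
      · exact h
      · rw [inner_neg_right]
        rcases hu₀s₂.lt_or_gt with h' | h'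
        · exact absurd h' h
        · linarith
    have hUZ : U ≤ Z := le_trans le_sup_left le_sup_left
    have hs₀Z : s₀ ∈ Z := Submodule.mem_sup_left
      (Submodule.mem_sup_right (Submodule.mem_span_singleton_self s₀))
    have hwZ : w ∈ Z := Submodule.mem_sup_right (Submodule.mem_span_singleton_self w)
    have hZu : ∀ z ∈ Z, ⟪z, u⟫ = 0 := fun z hz => (Submodule.mem_orthogonal Z u).1 huZ z hz
    have hs₀u : ⟪s₀, u⟫ = 0 := hZu s₀ hs₀Z
    have hune : u ≠ 0 := by
      intro h
      rw [h, inner_zero_right] at hs₂u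
      exact lt_irrefl 0 hs₂u
    have hTu : ∀ s ∈ T, ⟪s, u⟫ = ⟪s₀, u⟫ := by
      intro s hs
      have hd := hUdiff s hs
      have h1 : ⟪s - s₀, u⟫ = 0 := hZu _ (hUZ hd)
      rw [inner_sub_left] at h1
      linarith
    have hcross : ∃ s ∈ S, ⟪s, u⟫ < ⟪s₀, u⟫ := ⟨s₂, hs₂S, by rw [hs₀u]; exact hs₂u⟩
    obtain ⟨t, htpos, hlow, hsub⟩ := wright_move S w u s₀ hs₀ hTu hcross
    refine ⟨w + t • u, ?_, ?_, hsub⟩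
    · intro h0
      have huu : 0 < ⟪u, u⟫ := real_inner_self_pos' hune
      have hwu : ⟪w, u⟫ = 0 := hZu w hwZ
      have : ⟪w + t • u, u⟫ = t * ⟪u, u⟫ := by
        rw [inner_add_left, real_inner_smul_left, hwu]
        ring
      rw [h0, inner_zero_left] at this
      nlinarith
    · intro s hs
      have h1 := hlow s hs
      rw [hs₀u] at h1
      have hm0 : 0 ≤ ⟪s₀, w⟫ := hw s₀ hs₀S
      nlinarith


lemma hrank1' (x : E) : finrank ℝ (ℝ ∙ x) ≤ 1 := by
  rcases eq_or_ne x 0 with rfl | hx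
  · rw [Submodule.span_zero_singleton]; simp
  · rw [finrank_span_singleton hx]

/-- If the full argmin face is everything, the span of `S` has dimension at most
`dim (vectorSpan S) + 1`. -/
lemma span_le_vectorSpan_sup {S : Finset E} {s₀ : E} (hs₀ : s₀ ∈ S) :
    finrank ℝ (Submodule.span ℝ (S : Set E)) ≤
      finrank ℝ (vectorSpan ℝ (S : Set E)) + 1 := by
  have hle : Submodule.span ℝ (S : Set E) ≤ vectorSpan ℝ (S : Set E) ⊔ (ℝ ∙ s₀) := by
    apply Submodule.span_le.2
    intro s hs
    have h1 : s - s₀ ∈ vectorSpan ℝ (S : Set E) := by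
      have := vsub_mem_vectorSpan ℝ hs (Finset.mem_coe.2 hs₀)
      simpa [vsub_eq_sub] using this
    have h2 : s = (s - s₀) + s₀ := by abel
    rw [h2]
    exact add_mem (Submodule.mem_sup_left h1)
      (Submodule.mem_sup_right (Submodule.mem_span_singleton_self s₀))
  refine le_trans (Submodule.finrank_mono hle) ?_
  refine le_trans (Submodule.finrank_add_le_finrank_add_finrank _ _) ?_
  have := hrank1' s₀
  omega

lemma wright_grow (S : Finset E) (hS : S.Nonempty) :
    ∀ (k : ℕ) (w : E), w ≠ 0 → (∀ s ∈ S, 0 ≤ ⟪s, w⟫) →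
      S.card ≤ (wArgmin S w).card + k →
      ∃ w' : E, w' ≠ 0 ∧ (∀ s ∈ S, 0 ≤ ⟪s, w'⟫) ∧
        finrank ℝ (Submodule.span ℝ (S : Set E)) ≤
          finrank ℝ (vectorSpan ℝ ((wArgmin S w' : Finset E) : Set E)) + 1 := by
  intro k
  induction k with
  | zero =>
    intro w hw0 hw hcard
    refine ⟨w, hw0, hw, ?_⟩
    have hTS : wArgmin S w = S :=
      Finset.eq_of_subset_of_card_le (wArgmin_subset S w) (by omega)
    rw [hTS]
    obtain ⟨s₀, hs₀⟩ := hS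
    exact span_le_vectorSpan_sup hs₀
  | succ k ih =>
    intro w hw0 hw hcard
    by_cases hdim : finrank ℝ (Submodule.span ℝ (S : Set E)) ≤
        finrank ℝ (vectorSpan ℝ ((wArgmin S w : Finset E) : Set E)) + 1
    · exact ⟨w, hw0, hw, hdim⟩
    · push_neg at hdim
      obtain ⟨w', hw'0, hw', hsub⟩ := wright_step S w hw0 hw (by omega)
      have hlt : (wArgmin S w).card < (wArgmin S w').card := Finset.card_lt_card hsub
      exact ih w' hw'0 hw' (by omega)

/-- Core of Wright's theorem: a nonzero functional, nonnegative on `S`, whose argmin face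
has codimension at most 1 in the span of `S`. -/
lemma wright_core (S : Finset E) (hS : S.Nonempty)
    (h0 : (0 : E) ∉ convexHull ℝ (S : Set E)) :
    ∃ w : E, w ≠ 0 ∧ (∀ s ∈ S, 0 ≤ ⟪s, w⟫) ∧
      finrank ℝ (Submodule.span ℝ (S : Set E)) ≤
        finrank ℝ (vectorSpan ℝ ((wArgmin S w : Finset E) : Set E)) + 1 := by
  classical
  have hconv : Convex ℝ (convexHull ℝ (S : Set E)) := convex_convexHull ℝ _
  have hclosed : IsClosed (convexHull ℝ (S : Set E)) :=
    (S.finite_toSet.isCompact_convexHull ℝ).isClosed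
  obtain ⟨f, u, hfu, hf⟩ := geometric_hahn_banach_point_closed hconv hclosed h0
  have hf0 : f 0 = 0 := map_zero f
  have hupos : 0 < u := by rw [← hf0]; exact hfu
  set w₀ : E := (InnerProductSpace.toDual ℝ E).symm f with hw₀
  have hw₀app : ∀ x : E, ⟪x, w₀⟫ = f x := by
    intro x
    rw [real_inner_comm]
    exact InnerProductSpace.toDual_symm_apply
  have hw₀S : ∀ s ∈ S, 0 ≤ ⟪s, w₀⟫ := by
    intro s hs
    have := hf s (subset_convexHull ℝ _ (Finset.mem_coe.2 hs))
    rw [hw₀app]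
    linarith
  have hw₀ne : w₀ ≠ 0 := by
    obtain ⟨s, hs⟩ := hS
    intro h
    have h1 := hf s (subset_convexHull ℝ _ (Finset.mem_coe.2 hs))
    have h2 := hw₀app s
    rw [h, inner_zero_right] at h2
    linarith
  exact wright_grow S hS S.card w₀ hw₀ne hw₀S (by omega)


/-- Wright's separation theorem, general inner-product-space version. -/

lemma wright_main (P₁ P₂ : Set E) (F₁ : Finset E) (F₂ : Finset E)
    (hP₁ : P₁ = convexHull ℝ (F₁ : Set E)) (hP₂ : P₂ = convexHull ℝ (F₂ : Set E))
    (hne₁ : P₁.Nonempty) (hne₂ : P₂.Nonempty) (hdisj : Disjoint P₁ P₂) :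
    ∃ (w : E) (c₁ c₂ : ℝ), w ≠ 0 ∧ c₁ ≤ c₂ ∧
      (∀ x ∈ P₁, ⟪x, w⟫ ≤ c₁) ∧
      (∀ x ∈ P₂, c₂ ≤ ⟪x, w⟫) ∧
      (P₁ ∩ {x | ⟪x, w⟫ = c₁}).Nonempty ∧
      (P₂ ∩ {x | ⟪x, w⟫ = c₂}).Nonempty ∧
      finrank ℝ (affineSpan ℝ (convexHull ℝ (P₁ ∪ P₂))).direction ≤
        finrank ℝ (affineSpan ℝ (P₁ ∩ {x | ⟪x, w⟫ = c₁})).direction +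
        finrank ℝ (affineSpan ℝ (P₂ ∩ {x | ⟪x, w⟫ = c₂})).direction + 1 := by
  classical
  have hF₁ne : F₁.Nonempty := by
    rcases F₁.eq_empty_or_nonempty with h | h
    · exfalso; rw [hP₁, h] at hne₁; simp at hne₁
    · exact h
  have hF₂ne : F₂.Nonempty := by
    rcases F₂.eq_empty_or_nonempty with h | h
    · exfalso; rw [hP₂, h] at hne₂; simp at hne₂
    · exact h
  set S : Finset E := (F₂ ×ˢ F₁).image (fun p => p.1 - p.2) with hSdef
  have hmemS : ∀ a ∈ F₁, ∀ b ∈ F₂, b - a ∈ S := by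
    intro a ha b hb
    exact Finset.mem_image.2 ⟨(b, a), Finset.mem_product.2 ⟨hb, ha⟩, rfl⟩
  have hSrep : ∀ s ∈ S, ∃ b ∈ F₂, ∃ a ∈ F₁, s = b - a := by
    intro s hs
    rcases Finset.mem_image.1 hs with ⟨p, hp, rfl⟩
    rcases Finset.mem_product.1 hp with ⟨hp1, hp2⟩
    exact ⟨p.1, hp1, p.2, hp2, rfl⟩
  have hSne : S.Nonempty := by
    obtain ⟨a₀, ha₀⟩ := hF₁ne
    obtain ⟨b₀, hb₀⟩ := hF₂ne
    exact ⟨b₀ - a₀, hmemS a₀ ha₀ b₀ hb₀⟩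
  have hScoe : (S : Set E) = (F₂ : Set E) - (F₁ : Set E) := by
    rw [hSdef, Finset.coe_image, Finset.coe_product, Set.image_prod]
    exact Set.image2_sub
  have h0S : (0 : E) ∉ convexHull ℝ (S : Set E) := by
    rw [hScoe, convexHull_sub]
    intro hmem
    rcases Set.mem_sub.1 hmem with ⟨b, hb, a, ha, hba⟩
    have hab : b = a := sub_eq_zero.1 hba
    have haP₁ : a ∈ P₁ := by rw [hP₁]; exact ha
    have haP₂ : a ∈ P₂ := by rw [hP₂]; rw [hab] at hb; exact hb
    exact Set.disjoint_left.1 hdisj haP₁ haP₂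
  obtain ⟨w, hw0, hwS, hdim⟩ := wright_core S hSne h0S
  obtain ⟨a₀, ha₀F, ha₀max⟩ := F₁.exists_max_image (fun a => ⟪a, w⟫) hF₁ne
  obtain ⟨b₀, hb₀F, hb₀min⟩ := F₂.exists_min_image (fun b => ⟪b, w⟫) hF₂ne
  have hc₁₂ : ⟪a₀, w⟫ ≤ ⟪b₀, w⟫ := by
    have h1 := hwS (b₀ - a₀) (hmemS a₀ ha₀F b₀ hb₀F)
    rw [inner_sub_left] at h1
    linarith
  have hlin : IsLinearMap ℝ (fun x : E => ⟪x, w⟫) :=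
    ⟨fun x y => inner_add_left x y w, fun c x => real_inner_smul_left x w c⟩
  have hP₁le : ∀ x ∈ P₁, ⟪x, w⟫ ≤ ⟪a₀, w⟫ := by
    intro x hx
    rw [hP₁] at hx
    exact convexHull_min (fun a ha => ha₀max a ha) (convex_halfSpace_le hlin _) hx
  have hP₂ge : ∀ x ∈ P₂, ⟪b₀, w⟫ ≤ ⟪x, w⟫ := by
    intro x hx
    rw [hP₂] at hx
    exact convexHull_min (fun b hb => hb₀min b hb) (convex_halfSpace_ge hlin _) hx
  have ha₀P : a₀ ∈ P₁ := by rw [hP₁]; exact subset_convexHull ℝ _ ha₀F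
  have hb₀P : b₀ ∈ P₂ := by rw [hP₂]; exact subset_convexHull ℝ _ hb₀F
  set A : Finset E := F₁.filter (fun a => ⟪a, w⟫ = ⟪a₀, w⟫) with hAdef
  set B : Finset E := F₂.filter (fun b => ⟪b, w⟫ = ⟪b₀, w⟫) with hBdef
  have hTrep : ∀ t ∈ wArgmin S w, ∃ a ∈ A, ∃ b ∈ B, t = b - a := by
    intro t ht
    rcases mem_wArgmin_iff.1 ht with ⟨htS, hmin⟩
    rcases hSrep t htS with ⟨b, hb, a, ha, rfl⟩
    have h1 := hmin (b₀ - a₀) (hmemS a₀ ha₀F b₀ hb₀F)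
    rw [inner_sub_left, inner_sub_left] at h1
    have h2 := ha₀max a ha
    have h3 := hb₀min b hb
    have h4 : ⟪a, w⟫ = ⟪a₀, w⟫ := by linarith
    have h5 : ⟪b, w⟫ = ⟪b₀, w⟫ := by linarith
    exact ⟨a, Finset.mem_filter.2 ⟨ha, h4⟩, b, Finset.mem_filter.2 ⟨hb, h5⟩, rfl⟩
  have hAsub : (A : Set E) ⊆ P₁ ∩ {x | ⟪x, w⟫ = ⟪a₀, w⟫} := by
    intro a ha
    rcases Finset.mem_filter.1 (Finset.mem_coe.1 ha) with ⟨h1, h2⟩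
    exact ⟨by rw [hP₁]; exact subset_convexHull ℝ _ h1, h2⟩
  have hBsub : (B : Set E) ⊆ P₂ ∩ {x | ⟪x, w⟫ = ⟪b₀, w⟫} := by
    intro b hb
    rcases Finset.mem_filter.1 (Finset.mem_coe.1 hb) with ⟨h1, h2⟩
    exact ⟨by rw [hP₂]; exact subset_convexHull ℝ _ h1, h2⟩
  refine ⟨w, ⟪a₀, w⟫, ⟪b₀, w⟫, hw0, hc₁₂, hP₁le, hP₂ge,
    ⟨a₀, ha₀P, rfl⟩, ⟨b₀, hb₀P, rfl⟩, ?_⟩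
  have step1 : finrank ℝ (affineSpan ℝ (convexHull ℝ (P₁ ∪ P₂))).direction ≤
      finrank ℝ (Submodule.span ℝ (S : Set E)) := by
    rw [affineSpan_convexHull]
    have hsub : P₁ ∪ P₂ ⊆ (affineSpan ℝ ((F₁ : Set E) ∪ (F₂ : Set E)) : Set E) := by
      apply Set.union_subset
      · rw [hP₁]
        refine (convexHull_subset_affineSpan (F₁ : Set E)).trans ?_
        exact affineSpan_mono ℝ Set.subset_union_left
      · rw [hP₂]
        refine (convexHull_subset_affineSpan (F₂ : Set E)).trans ?_
        exact affineSpan_mono ℝ Set.subset_union_right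
    have hle1 : affineSpan ℝ (P₁ ∪ P₂) ≤ affineSpan ℝ ((F₁ : Set E) ∪ (F₂ : Set E)) :=
      affineSpan_le.2 hsub
    have hle3 : vectorSpan ℝ ((F₁ : Set E) ∪ (F₂ : Set E)) ≤ Submodule.span ℝ (S : Set E) := by
      rw [vectorSpan_def]
      apply Submodule.span_le.2
      intro x hx
      rcases Set.mem_vsub.1 hx with ⟨p, hp, q, hq, rfl⟩
      have hin : ∀ a ∈ F₁, ∀ b ∈ F₂, b - a ∈ Submodule.span ℝ (S : Set E) :=
        fun a ha b hb => Submodule.subset_span (Finset.mem_coe.2 (hmemS a ha b hb))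
      have hvs : p -ᵥ q = p - q := rfl
      rw [SetLike.mem_coe, hvs]
      rcases hp with hp | hp <;> rcases hq with hq | hq
      · have he : p - q = (b₀ - q) - (b₀ - p) := by abel
        rw [he]
        exact sub_mem (hin q hq b₀ hb₀F) (hin p hp b₀ hb₀F)
      · have he : p - q = -(q - p) := by abel
        rw [he]
        exact neg_mem (hin p hp q hq)
      · exact hin q hq p hp
      · have he : p - q = (p - a₀) - (q - a₀) := by abel
        rw [he]
        exact sub_mem (hin a₀ ha₀F p hp) (hin a₀ ha₀F q hq)
    have hle2 : (affineSpan ℝ (P₁ ∪ P₂)).direction ≤ Submodule.span ℝ (S : Set E) := by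
      refine le_trans (AffineSubspace.direction_le hle1) ?_
      rw [direction_affineSpan]
      exact hle3
    exact Submodule.finrank_mono hle2
  have step2 : vectorSpan ℝ ((wArgmin S w : Finset E) : Set E) ≤
      vectorSpan ℝ (A : Set E) ⊔ vectorSpan ℝ (B : Set E) := by
    rw [vectorSpan_def]
    apply Submodule.span_le.2
    intro x hx
    rcases Set.mem_vsub.1 hx with ⟨p, hp, q, hq, rfl⟩
    rcases hTrep p (Finset.mem_coe.1 hp) with ⟨a, haA, b, hbB, rfl⟩
    rcases hTrep q (Finset.mem_coe.1 hq) with ⟨a', haA', b', hbB', rfl⟩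
    have hvs : (b - a) -ᵥ (b' - a') = (b - a) - (b' - a') := rfl
    rw [SetLike.mem_coe, hvs]
    have he : (b - a) - (b' - a') = (b - b') + (a' - a) := by abel
    rw [he]
    have h1 : b - b' ∈ vectorSpan ℝ (B : Set E) := by
      have := vsub_mem_vectorSpan ℝ (Finset.mem_coe.2 hbB) (Finset.mem_coe.2 hbB')
      simpa [vsub_eq_sub] using this
    have h2 : a' - a ∈ vectorSpan ℝ (A : Set E) := by
      have := vsub_mem_vectorSpan ℝ (Finset.mem_coe.2 haA') (Finset.mem_coe.2 haA)
      simpa [vsub_eq_sub] using this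
    exact add_mem (Submodule.mem_sup_right h1) (Submodule.mem_sup_left h2)
  have step3 : finrank ℝ (vectorSpan ℝ ((wArgmin S w : Finset E) : Set E)) ≤
      finrank ℝ (vectorSpan ℝ (A : Set E)) + finrank ℝ (vectorSpan ℝ (B : Set E)) :=
    le_trans (Submodule.finrank_mono step2)
      (Submodule.finrank_add_le_finrank_add_finrank _ _)
  have step4 : finrank ℝ (vectorSpan ℝ (A : Set E)) ≤
      finrank ℝ (affineSpan ℝ (P₁ ∩ {x | ⟪x, w⟫ = ⟪a₀, w⟫})).direction := by
    rw [direction_affineSpan]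
    exact Submodule.finrank_mono (vectorSpan_mono ℝ hAsub)
  have step5 : finrank ℝ (vectorSpan ℝ (B : Set E)) ≤
      finrank ℝ (affineSpan ℝ (P₂ ∩ {x | ⟪x, w⟫ = ⟪b₀, w⟫})).direction := by
    rw [direction_affineSpan]
    exact Submodule.finrank_mono (vectorSpan_mono ℝ hBsub)
  omega


end Wright

/-- Wright's separation theorem: two nonempty disjoint convex polytopes `P₁, P₂` in `ℝ^d`
can be separated by parallel hyperplanes `H₁ = {⟪·,w⟫ = c₁}` and `H₂ = {⟪·,w⟫ = c₂}`
supporting nonempty faces of `P₁` and `P₂` respectively, with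
`dim(H₁ ∩ P₁) + dim(H₂ ∩ P₂) ≥ dim(conv(P₁ ∪ P₂)) − 1`. -/
theorem stmt17 (d : ℕ) (P₁ P₂ : Set (EuclideanSpace ℝ (Fin d)))
    (h₁ : IsPolytope P₁) (h₂ : IsPolytope P₂)
    (hne₁ : P₁.Nonempty) (hne₂ : P₂.Nonempty)
    (hdisj : Disjoint P₁ P₂) :
    ∃ (w : EuclideanSpace ℝ (Fin d)) (c₁ c₂ : ℝ), w ≠ 0 ∧ c₁ ≤ c₂ ∧
      (∀ x ∈ P₁, (inner ℝ x w : ℝ) ≤ c₁) ∧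
      (∀ x ∈ P₂, c₂ ≤ (inner ℝ x w : ℝ)) ∧
      (P₁ ∩ {x | (inner ℝ x w : ℝ) = c₁}).Nonempty ∧
      (P₂ ∩ {x | (inner ℝ x w : ℝ) = c₂}).Nonempty ∧
      sdim (convexHull ℝ (P₁ ∪ P₂)) ≤
        sdim (P₁ ∩ {x | (inner ℝ x w : ℝ) = c₁}) +
        sdim (P₂ ∩ {x | (inner ℝ x w : ℝ) = c₂}) + 1 := by
  obtain ⟨F₁, hP₁⟩ := h₁
  obtain ⟨F₂, hP₂⟩ := h₂
  obtain ⟨w, c₁, c₂, hw0, hc, hle1, hle2, hne1, hne2, hd⟩ :=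
    wright_main P₁ P₂ F₁ F₂ hP₁ hP₂ hne₁ hne₂ hdisj
  exact ⟨w, c₁, c₂, hw0, hc, hle1, hle2, hne1, hne2, hd⟩

end
end
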